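/- Define T₀(s,λ) = (1/√(2λs))·∫₀¹ dξ/√((1-ξ³)/3 - s(1-ξ⁴)/4) for s ∈ (0,1), λ > 0. Then lim_{s→0⁺} T₀(s,λ) = +∞ and lim_{s→1⁻} T₀(s,λ) = +∞. -/
import Mathlib

open intervalIntegral Real MeasureTheory Filter Set

noncomputable def T₀ : ℝ → ℝ → ℝ :=
  fun s lam => (1 / Real.sqrt (2 * lam * s)) *
    ∫ ξ in (0:ℝ)..1, 1 / Real.sqrt ((1 - ξ^3)/3 - s * (1 - ξ^4)/4)

lemma F_lb {s ξ : ℝ} (hs0 : 0 ≤ s) (hs1 : s ≤ 1) (hξ0 : 0 ≤ ξ) (hξ1 : ξ ≤ 1) :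
    (1 - s) * (1 - ξ) / 3 ≤ (1 - ξ^3)/3 - s * (1 - ξ^4)/4 := by
  nlinarith [sq_nonneg (ξ - 1), sq_nonneg ξ, mul_nonneg hs0 (sq_nonneg (ξ-1)),
    mul_nonneg (mul_nonneg hs0 (sq_nonneg (ξ-1))) (sq_nonneg ξ),
    mul_nonneg (mul_nonneg hs0 (sq_nonneg (ξ-1))) hξ0,
    mul_nonneg (mul_nonneg (sub_nonneg.2 hs1) hξ0) (sub_nonneg.2 hξ1),
    mul_nonneg (mul_nonneg (mul_nonneg (sub_nonneg.2 hs1) hξ0) (sub_nonneg.2 hξ1)) hξ0]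

lemma F_ub {s ξ : ℝ} (hs0 : 0 ≤ s) (hs1 : s ≤ 1) (hξ0 : 0 ≤ ξ) (hξ1 : ξ ≤ 1) :
    (1 - ξ^3)/3 - s * (1 - ξ^4)/4 ≤ (1 - s) * (1 - ξ) + (1 - ξ)^2 / 2 := by
  nlinarith [sq_nonneg (ξ - 1), sq_nonneg ξ, mul_nonneg hs0 (sq_nonneg (ξ-1)),
    mul_nonneg (sub_nonneg.2 hs1) (mul_nonneg hξ0 (sub_nonneg.2 hξ1)),
    mul_nonneg (mul_nonneg (sub_nonneg.2 hs1) (mul_nonneg hξ0 (sub_nonneg.2 hξ1))) hξ0,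
    mul_nonneg (mul_nonneg hs0 (sq_nonneg (ξ-1))) (mul_nonneg hξ0 (sub_nonneg.2 hξ1)),
    mul_nonneg (mul_nonneg hs0 (sq_nonneg (ξ-1))) hξ0]

lemma f_integrable {s : ℝ} (hs0 : 0 < s) (hs1 : s < 1) :
    IntervalIntegrable (fun ξ => 1 / Real.sqrt ((1 - ξ^3)/3 - s * (1 - ξ^4)/4))
      volume (0:ℝ) 1 := by
  set C : ℝ := (Real.sqrt ((1 - s)/3))⁻¹ with hC
  have hg0 : IntervalIntegrable (fun x : ℝ => x ^ (-(1/2) : ℝ)) volume 0 1 :=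
    intervalIntegrable_rpow' (by norm_num)
  have hg1 : IntervalIntegrable (fun x : ℝ => (1 - x) ^ (-(1/2) : ℝ)) volume 0 1 := by
    have := (hg0.comp_sub_left 1)
    simpa using this.symm
  have hg : IntervalIntegrable (fun x : ℝ => C * (1 - x) ^ (-(1/2) : ℝ)) volume 0 1 :=
    hg1.const_mul C
  apply hg.mono_fun'
  · apply Measurable.aestronglyMeasurable
    apply Measurable.div measurable_const
    exact (Real.continuous_sqrt.comp (by continuity)).measurable
  · rw [Filter.EventuallyLE, ae_restrict_iff' measurableSet_uIoc]
    filter_upwards with ξ hξ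
    rw [uIoc_of_le (by norm_num : (0:ℝ) ≤ 1)] at hξ
    obtain ⟨hξ0, hξ1⟩ := hξ
    have h1ξ : 0 ≤ 1 - ξ := by linarith
    have hFlb := F_lb hs0.le hs1.le hξ0.le hξ1
    have hF0 : 0 ≤ (1 - ξ^3)/3 - s * (1 - ξ^4)/4 := le_trans (div_nonneg (mul_nonneg (by linarith) h1ξ) (by norm_num)) hFlb
    have hnorm : ‖1 / Real.sqrt ((1 - ξ^3)/3 - s * (1 - ξ^4)/4)‖
        = 1 / Real.sqrt ((1 - ξ^3)/3 - s * (1 - ξ^4)/4) := by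
      rw [Real.norm_eq_abs, abs_of_nonneg (one_div_nonneg.2 (Real.sqrt_nonneg _))]
    rw [hnorm]
    rcases eq_or_lt_of_le hξ1 with h | h
    · subst h
      norm_num [Real.zero_rpow]
    · have h1ξ' : 0 < 1 - ξ := by linarith
      have hrw : (1 - ξ) ^ (-(1/2) : ℝ) = (Real.sqrt (1 - ξ))⁻¹ := by
        rw [Real.rpow_neg h1ξ, ← Real.sqrt_eq_rpow]
      rw [hrw]
      have hFlb' : (1 - s)/3 * (1 - ξ) ≤ (1 - ξ^3)/3 - s * (1 - ξ^4)/4 := by linarith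
      have hs3 : 0 < (1 - s)/3 := by linarith
      have hsq : Real.sqrt ((1 - s)/3) * Real.sqrt (1 - ξ)
          ≤ Real.sqrt ((1 - ξ^3)/3 - s * (1 - ξ^4)/4) := by
        rw [← Real.sqrt_mul hs3.le]
        exact Real.sqrt_le_sqrt hFlb'
      have hpos : 0 < Real.sqrt ((1 - s)/3) * Real.sqrt (1 - ξ) := by positivity
      calc 1 / Real.sqrt ((1 - ξ^3)/3 - s * (1 - ξ^4)/4)
          ≤ 1 / (Real.sqrt ((1 - s)/3) * Real.sqrt (1 - ξ)) :=
            one_div_le_one_div_of_le hpos hsq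
        _ = C * (Real.sqrt (1 - ξ))⁻¹ := by rw [hC]; field_simp

lemma I_lb1 {s : ℝ} (hs0 : 0 < s) (hs1 : s < 1) :
    (1:ℝ)/2 ≤ ∫ ξ in (0:ℝ)..1, 1 / Real.sqrt ((1 - ξ^3)/3 - s * (1 - ξ^4)/4) := by
  set f := fun ξ : ℝ => 1 / Real.sqrt ((1 - ξ^3)/3 - s * (1 - ξ^4)/4) with hf
  have hint := f_integrable hs0 hs1
  have hsub1 : Set.uIcc (0:ℝ) (1/2) ⊆ Set.uIcc (0:ℝ) 1 := by
    rw [Set.uIcc_of_le (by norm_num), Set.uIcc_of_le (by norm_num)]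
    exact Set.Icc_subset_Icc le_rfl (by norm_num)
  have hsub2 : Set.uIcc (1/2:ℝ) 1 ⊆ Set.uIcc (0:ℝ) 1 := by
    rw [Set.uIcc_of_le (by norm_num), Set.uIcc_of_le (by norm_num)]
    exact Set.Icc_subset_Icc (by norm_num) le_rfl
  have hint1 : IntervalIntegrable f volume 0 (1/2) := hint.mono_set hsub1
  have hint2 : IntervalIntegrable f volume (1/2) 1 := hint.mono_set hsub2
  have hsplit : (∫ ξ in (0:ℝ)..(1/2), f ξ) + ∫ ξ in (1/2:ℝ)..1, f ξ
      = ∫ ξ in (0:ℝ)..1, f ξ := integral_add_adjacent_intervals hint1 hint2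
  have h2 : 0 ≤ ∫ ξ in (1/2:ℝ)..1, f ξ :=
    intervalIntegral.integral_nonneg (by norm_num)
      (fun x _ => one_div_nonneg.2 (Real.sqrt_nonneg _))
  have h1 : (1:ℝ)/2 ≤ ∫ ξ in (0:ℝ)..(1/2), f ξ := by
    have hmono : (∫ _ in (0:ℝ)..(1/2), (1:ℝ)) ≤ ∫ ξ in (0:ℝ)..(1/2), f ξ := by
      apply intervalIntegral.integral_mono_on (by norm_num) intervalIntegrable_const hint1
      intro x hx
      obtain ⟨hx0, hx1⟩ := hx
      have hF0 : 0 < (1 - x^3)/3 - s * (1 - x^4)/4 := by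
        have := F_lb hs0.le hs1.le hx0 (by linarith)
        nlinarith
      have hF1 : (1 - x^3)/3 - s * (1 - x^4)/4 ≤ 1 := by
        have hx3 : 0 ≤ x^3 := by positivity
        have hx4 : x^4 ≤ 1 := by nlinarith
        have := mul_nonneg hs0.le (by linarith : (0:ℝ) ≤ 1 - x^4)
        nlinarith
      have : 1/1 ≤ 1 / Real.sqrt ((1 - x^3)/3 - s * (1 - x^4)/4) :=
        one_div_le_one_div_of_le (Real.sqrt_pos.2 hF0) (Real.sqrt_le_one.mpr hF1)
      simpa [hf] using this
    simpa using hmono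
  linarith

lemma I_lb2 {s : ℝ} (hs0 : 0 < s) (hs1 : s < 1) :
    (Real.sqrt (3/2))⁻¹ * (- Real.log (1 - s))
      ≤ ∫ ξ in (0:ℝ)..1, 1 / Real.sqrt ((1 - ξ^3)/3 - s * (1 - ξ^4)/4) := by
  set f := fun ξ : ℝ => 1 / Real.sqrt ((1 - ξ^3)/3 - s * (1 - ξ^4)/4) with hf
  have hint := f_integrable hs0 hs1
  have hsub1 : Set.uIcc (0:ℝ) s ⊆ Set.uIcc (0:ℝ) 1 := by
    rw [Set.uIcc_of_le hs0.le, Set.uIcc_of_le (by norm_num)]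
    exact Set.Icc_subset_Icc le_rfl hs1.le
  have hsub2 : Set.uIcc s 1 ⊆ Set.uIcc (0:ℝ) 1 := by
    rw [Set.uIcc_of_le hs1.le, Set.uIcc_of_le (by norm_num)]
    exact Set.Icc_subset_Icc hs0.le le_rfl
  have hint1 : IntervalIntegrable f volume 0 s := hint.mono_set hsub1
  have hint2 : IntervalIntegrable f volume s 1 := hint.mono_set hsub2
  have hsplit : (∫ ξ in (0:ℝ)..s, f ξ) + ∫ ξ in s..1, f ξ
      = ∫ ξ in (0:ℝ)..1, f ξ := integral_add_adjacent_intervals hint1 hint2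
  have h2 : 0 ≤ ∫ ξ in s..1, f ξ :=
    intervalIntegral.integral_nonneg hs1.le
      (fun x _ => one_div_nonneg.2 (Real.sqrt_nonneg _))
  -- the comparison function
  set K : ℝ := (Real.sqrt (3/2))⁻¹ with hK
  have hgcont : ContinuousOn (fun ξ : ℝ => K * (1/(1-ξ))) (Set.uIcc 0 s) := by
    rw [Set.uIcc_of_le hs0.le]
    apply ContinuousOn.mul continuousOn_const
    apply ContinuousOn.div continuousOn_const (by fun_prop)
    intro x hx
    obtain ⟨_, hx1⟩ := hx
    intro hc; rw [sub_eq_zero] at hc; linarith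
  have hgint : IntervalIntegrable (fun ξ : ℝ => K * (1/(1-ξ))) volume 0 s :=
    hgcont.intervalIntegrable
  have h1 : (∫ ξ in (0:ℝ)..s, K * (1/(1-ξ))) ≤ ∫ ξ in (0:ℝ)..s, f ξ := by
    apply intervalIntegral.integral_mono_on hs0.le hgint hint1
    intro x hx
    obtain ⟨hx0, hx1⟩ := hx
    have h1x : 0 < 1 - x := by linarith
    have hF0 : 0 < (1 - x^3)/3 - s * (1 - x^4)/4 := by
      have := F_lb hs0.le hs1.le hx0 (by linarith)
      nlinarith
    have hFub : (1 - x^3)/3 - s * (1 - x^4)/4 ≤ 3/2 * (1-x)^2 := by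
      have := F_ub hs0.le hs1.le hx0 (by linarith)
      nlinarith [sq_nonneg (1-x)]
    have hsq : Real.sqrt ((1 - x^3)/3 - s * (1 - x^4)/4) ≤ Real.sqrt (3/2) * (1-x) := by
      calc Real.sqrt ((1 - x^3)/3 - s * (1 - x^4)/4) ≤ Real.sqrt (3/2 * (1-x)^2) :=
            Real.sqrt_le_sqrt hFub
        _ = Real.sqrt (3/2) * (1-x) := by
            rw [Real.sqrt_mul (by norm_num), Real.sqrt_sq h1x.le]
    calc K * (1/(1-x)) = 1 / (Real.sqrt (3/2) * (1-x)) := by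
          rw [hK]; field_simp
      _ ≤ f x := one_div_le_one_div_of_le (Real.sqrt_pos.2 hF0) hsq
  have hcomp : (∫ ξ in (0:ℝ)..s, K * (1/(1-ξ))) = K * (- Real.log (1 - s)) := by
    rw [intervalIntegral.integral_const_mul]
    congr 1
    have hcs := intervalIntegral.integral_comp_sub_left (a := 0) (b := s)
      (fun u : ℝ => 1/u) 1
    simp only [sub_zero] at hcs
    rw [hcs, integral_one_div, Real.log_div one_ne_zero (by linarith), Real.log_one]
    · ring
    · rw [Set.uIcc_of_le (by linarith)]
      intro hmem
      obtain ⟨hm, _⟩ := hmem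
      linarith
  linarith [hcomp ▸ h1]

theorem stmt_6 (lam : ℝ) (hlam : 0 < lam) :
    Filter.Tendsto (fun s => T₀ s lam) (nhdsWithin 0 (Set.Ioo (0:ℝ) 1)) Filter.atTop ∧
      Filter.Tendsto (fun s => T₀ s lam) (nhdsWithin 1 (Set.Ioo (0:ℝ) 1)) Filter.atTop := by
  constructor
  · -- s → 0⁺
    have hbound : (fun s : ℝ => (Real.sqrt (2 * lam * s))⁻¹ * (1/2))
        ≤ᶠ[nhdsWithin 0 (Set.Ioo (0:ℝ) 1)] (fun s => T₀ s lam) := by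
      filter_upwards [self_mem_nhdsWithin] with s hs
      obtain ⟨hs0, hs1⟩ := hs
      have hI := I_lb1 hs0 hs1
      have hc : 0 ≤ (Real.sqrt (2*lam*s))⁻¹ := by positivity
      calc (Real.sqrt (2*lam*s))⁻¹ * (1/2)
          ≤ (Real.sqrt (2*lam*s))⁻¹ *
            ∫ ξ in (0:ℝ)..1, 1 / Real.sqrt ((1 - ξ^3)/3 - s * (1 - ξ^4)/4) :=
            mul_le_mul_of_nonneg_left hI hc
        _ = T₀ s lam := by rw [T₀, one_div]
    apply tendsto_atTop_mono' _ hbound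
    have h1 : Tendsto (fun s : ℝ => Real.sqrt (2*lam*s)) (nhdsWithin 0 (Set.Ioo (0:ℝ) 1))
        (nhdsWithin 0 (Set.Ioi (0:ℝ))) := by
      apply tendsto_nhdsWithin_of_tendsto_nhds_of_eventually_within
      · have hcont : Continuous (fun s : ℝ => Real.sqrt (2*lam*s)) := by fun_prop
        have := (hcont.tendsto 0).mono_left (nhdsWithin_le_nhds (s := Set.Ioo (0:ℝ) 1))
        simpa using this
      · filter_upwards [self_mem_nhdsWithin] with s hs
        exact Real.sqrt_pos.2 (by nlinarith [hs.1])
    exact (h1.inv_tendsto_nhdsGT_zero).atTop_mul_const (by norm_num : (0:ℝ) < 1/2)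
  · -- s → 1⁻
    have hc : Tendsto (fun s : ℝ => 1 / Real.sqrt (2 * lam * s))
        (nhdsWithin 1 (Set.Ioo (0:ℝ) 1)) (nhds (1 / Real.sqrt (2 * lam))) := by
      have hcont : ContinuousAt (fun s : ℝ => 1 / Real.sqrt (2 * lam * s)) 1 := by
        apply ContinuousAt.div continuousAt_const (by fun_prop)
        simp only [mul_one]
        exact ne_of_gt (Real.sqrt_pos.2 (by linarith))
      have := hcont.tendsto.mono_left (nhdsWithin_le_nhds (s := Set.Ioo (0:ℝ) 1))
      simpa using this
    have hI : Tendsto (fun s : ℝ => ∫ ξ in (0:ℝ)..1,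
        1 / Real.sqrt ((1 - ξ^3)/3 - s * (1 - ξ^4)/4))
        (nhdsWithin 1 (Set.Ioo (0:ℝ) 1)) Filter.atTop := by
      have hbound2 : (fun s : ℝ => (Real.sqrt (3/2))⁻¹ * (- Real.log (1 - s)))
          ≤ᶠ[nhdsWithin 1 (Set.Ioo (0:ℝ) 1)] (fun s : ℝ => ∫ ξ in (0:ℝ)..1,
            1 / Real.sqrt ((1 - ξ^3)/3 - s * (1 - ξ^4)/4)) := by
        filter_upwards [self_mem_nhdsWithin] with s hs
        exact I_lb2 hs.1 hs.2
      apply tendsto_atTop_mono' _ hbound2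
      have h1s : Tendsto (fun s : ℝ => 1 - s) (nhdsWithin 1 (Set.Ioo (0:ℝ) 1))
          (nhdsWithin 0 (Set.Ioi (0:ℝ))) := by
        apply tendsto_nhdsWithin_of_tendsto_nhds_of_eventually_within
        · have hcont : Continuous (fun s : ℝ => 1 - s) := by fun_prop
          have := (hcont.tendsto 1).mono_left (nhdsWithin_le_nhds (s := Set.Ioo (0:ℝ) 1))
          simpa using this
        · filter_upwards [self_mem_nhdsWithin] with s hs
          simpa using hs.2
      have hlog : Tendsto (fun s : ℝ => Real.log (1 - s))
          (nhdsWithin 1 (Set.Ioo (0:ℝ) 1)) Filter.atBot :=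
        Real.tendsto_log_nhdsGT_zero.comp h1s
      have hneg : Tendsto (fun s : ℝ => - Real.log (1 - s))
          (nhdsWithin 1 (Set.Ioo (0:ℝ) 1)) Filter.atTop :=
        tendsto_neg_atBot_atTop.comp hlog
      exact hneg.const_mul_atTop (by positivity)
    have hmul := Filter.Tendsto.pos_mul_atTop
      (show (0:ℝ) < 1 / Real.sqrt (2 * lam) from
        one_div_pos.2 (Real.sqrt_pos.2 (by linarith))) hc hI
    exact hmul
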